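/- Let A = diag(λ₁,...,λₙ) with 1 = λ₁ ≤ ... ≤ λₙ. With assumptions Σ_{i=1}^{μ} g_{i,k}² ≤ ε and g_{μ+1,k}² ≥ 2ε for some μ ∈ {1,...,n−1} and ε > 0, the inverse of the Yuan steplength satisfies 1/α_k^Y ≥ (2/3)·λ_{μ+1}. -/
import Mathlib


open Matrix

set_option maxHeartbeats 1000000

lemma sum_sq_pos_of_ne_zero {n : ℕ} (v : Fin n → ℝ) (hv : v ≠ 0) :
    0 < ∑ i, v i ^ 2 := by
  obtain ⟨i, hi⟩ := Function.ne_iff.mp hv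
  have h1 : 0 < v i ^ 2 := pow_two_pos_of_ne_zero hi
  have h2 : v i ^ 2 ≤ ∑ j, v j ^ 2 :=
    Finset.single_le_sum (fun j _ => sq_nonneg (v j)) (Finset.mem_univ i)
  linarith

lemma dot_self_eq {n : ℕ} (v : Fin n → ℝ) : v ⬝ᵥ v = ∑ i, v i ^ 2 := by
  simp [dotProduct, pow_two]

lemma dot_diag_eq {n : ℕ} (lam v : Fin n → ℝ) :
    v ⬝ᵥ (Matrix.diagonal lam).mulVec v = ∑ i, lam i * v i ^ 2 := by
  simp only [dotProduct, mulVec_diagonal]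
  exact Finset.sum_congr rfl (fun i _ => by ring)

/-- Under the Property-A hypotheses Σ_{i≤μ} g_{i,k}² ≤ ε and g_{μ+1,k}² ≥ 2ε,
the inverse of the Yuan steplength satisfies 1/α_k^Y ≥ (2/3)λ_{μ+1}. -/
theorem inv_yuan_property_A {n : ℕ} (lam : Fin n → ℝ)
    (hmono : Monotone lam) (hn : 0 < n) (h1 : lam ⟨0, hn⟩ = 1)
    (A : Matrix (Fin n) (Fin n) ℝ) (hA : A = Matrix.diagonal lam)
    (gkm1 gk s : Fin n → ℝ) (hgkm1 : gkm1 ≠ 0) (hgk : gk ≠ 0) (hs : s ≠ 0)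
    (μ : ℕ) (hμ1 : 1 ≤ μ) (hμn : μ < n) (ε : ℝ) (hε : 0 < ε)
    (hsum : ∑ i ∈ Finset.univ.filter (fun i : Fin n => (i : ℕ) < μ), gk i ^ 2 ≤ ε)
    (hbig : gk ⟨μ, hμn⟩ ^ 2 ≥ 2 * ε)
    (aSDkm1 aSDk aY : ℝ)
    (hSDkm1 : aSDkm1 = (gkm1 ⬝ᵥ gkm1) / (gkm1 ⬝ᵥ A.mulVec gkm1))
    (hSDk : aSDk = (gk ⬝ᵥ gk) / (gk ⬝ᵥ A.mulVec gk))
    (hY : aY = 2 / (Real.sqrt ((1 / aSDkm1 - 1 / aSDk) ^ 2 +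
        4 * (gk ⬝ᵥ gk) / (s ⬝ᵥ s)) + 1 / aSDkm1 + 1 / aSDk)) :
    1 / aY ≥ 2 / 3 * lam ⟨μ, hμn⟩ := by
  subst hA hSDkm1 hSDk hY
  have hlam1 : ∀ i : Fin n, 1 ≤ lam i := fun i => h1 ▸ hmono (by simp [Fin.le_def])
  set lamμ := lam ⟨μ, hμn⟩ with hlamμ
  have hlamμ1 : 1 ≤ lamμ := hlam1 _
  -- basic quantities
  set P := ∑ i, gk i ^ 2 with hP
  set Q := ∑ i, lam i * gk i ^ 2 with hQ
  have hPpos : 0 < P := sum_sq_pos_of_ne_zero gk hgk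
  have hQgeP : P ≤ Q :=
    Finset.sum_le_sum (fun i _ => by nlinarith [hlam1 i, sq_nonneg (gk i)])
  have hQpos : 0 < Q := lt_of_lt_of_le hPpos hQgeP
  -- previous step quantities
  have hP'pos : 0 < ∑ i, gkm1 i ^ 2 := sum_sq_pos_of_ne_zero gkm1 hgkm1
  have hQ'ge : (∑ i, gkm1 i ^ 2) ≤ ∑ i, lam i * gkm1 i ^ 2 :=
    Finset.sum_le_sum (fun i _ => by nlinarith [hlam1 i, sq_nonneg (gkm1 i)])
  have hQ'pos : 0 < ∑ i, lam i * gkm1 i ^ 2 := lt_of_lt_of_le hP'pos hQ'ge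
  have hSpos : 0 < ∑ i, s i ^ 2 := sum_sq_pos_of_ne_zero s hs
  -- the split of Q
  set S₁ := ∑ i ∈ Finset.univ.filter (fun i : Fin n => (i : ℕ) < μ), gk i ^ 2 with hS₁
  set S₂ := ∑ i ∈ Finset.univ.filter (fun i : Fin n => ¬ (i : ℕ) < μ), gk i ^ 2 with hS₂
  have hsplit : S₁ + S₂ = P := Finset.sum_filter_add_sum_filter_not _ _ _
  have hS₁nonneg : 0 ≤ S₁ := Finset.sum_nonneg (fun i _ => sq_nonneg _)
  have hS₂big : gk ⟨μ, hμn⟩ ^ 2 ≤ S₂ := by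
    apply Finset.single_le_sum (fun i _ => sq_nonneg (gk i))
    simp
  have hS₂2S₁ : 2 * S₁ ≤ S₂ := by
    have : S₁ ≤ ε := hsum
    linarith
  have hQge : S₁ + lamμ * S₂ ≤ Q := by
    have e1 : Q = (∑ i ∈ Finset.univ.filter (fun i : Fin n => (i : ℕ) < μ), lam i * gk i ^ 2)
        + ∑ i ∈ Finset.univ.filter (fun i : Fin n => ¬ (i : ℕ) < μ), lam i * gk i ^ 2 :=
      (Finset.sum_filter_add_sum_filter_not _ _ _).symm
    have e2 : S₁ ≤ ∑ i ∈ Finset.univ.filter (fun i : Fin n => (i : ℕ) < μ), lam i * gk i ^ 2 :=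
      Finset.sum_le_sum (fun i _ => by nlinarith [hlam1 i, sq_nonneg (gk i)])
    have e3 : lamμ * S₂ ≤ ∑ i ∈ Finset.univ.filter (fun i : Fin n => ¬ (i : ℕ) < μ),
        lam i * gk i ^ 2 := by
      rw [hS₂, Finset.mul_sum]
      refine Finset.sum_le_sum (fun i hi => ?_)
      have hiμ : μ ≤ (i : ℕ) := by
        simp only [Finset.mem_filter] at hi
        omega
      have : lamμ ≤ lam i := hmono (by simpa [Fin.le_def] using hiμ)
      nlinarith [sq_nonneg (gk i)]
    linarith
  -- key inequality: Q ≥ (2/3) lamμ P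
  have hkey : 2 / 3 * lamμ * P ≤ Q := by
    rw [← hsplit]
    nlinarith [mul_nonneg (le_trans zero_le_one hlamμ1) (by linarith : (0:ℝ) ≤ S₂ - 2 * S₁)]
  -- rewrite dot products
  rw [dot_self_eq, dot_self_eq, dot_self_eq, dot_diag_eq, dot_diag_eq]
  rw [one_div_div]
  set c := 1 / ((∑ i, gkm1 i ^ 2) / ∑ i, lam i * gkm1 i ^ 2) with hc
  set d := 1 / (P / Q) with hd
  have hcval : c = (∑ i, lam i * gkm1 i ^ 2) / (∑ i, gkm1 i ^ 2) := one_div_div _ _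
  have hdval : d = Q / P := one_div_div _ _
  have hcpos : 0 < c := by rw [hcval]; positivity
  have hdge : 2 / 3 * lamμ ≤ d := by
    rw [hdval, le_div_iff₀ hPpos]; linarith
  have hsqrt : d - c ≤ Real.sqrt ((c - d) ^ 2 + 4 * P / (∑ i, s i ^ 2)) := by
    have h1 : (c - d) ^ 2 ≤ (c - d) ^ 2 + 4 * P / (∑ i, s i ^ 2) := by
      have h0 : 0 ≤ 4 * P / (∑ i, s i ^ 2) := by positivity
      linarith
    have h2 : |c - d| ≤ Real.sqrt ((c - d) ^ 2 + 4 * P / (∑ i, s i ^ 2)) := by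
      rw [← Real.sqrt_sq_eq_abs]
      exact Real.sqrt_le_sqrt h1
    calc d - c ≤ |c - d| := by rw [abs_sub_comm]; exact le_abs_self _
      _ ≤ _ := h2
  calc 2 / 3 * lamμ ≤ d := hdge
    _ ≤ ((d - c) + c + d) / 2 := by linarith
    _ ≤ (Real.sqrt ((c - d) ^ 2 + 4 * P / (∑ i, s i ^ 2)) + c + d) / 2 := by linarith
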